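/- Let 𝔊 ⊆ GL(n,ℂ) be a finite subgroup acting on S = ℂ[X₁,…,Xₙ] by g·f = f ∘ g⁻¹, and let I ⊆ S be a 𝔊-cluster with I ⊆ ⟨X₁,…,Xₙ⟩. Then the zero locus V(I) = {p ∈ ℂⁿ : f(p) = 0 for all f ∈ I} equals {0}; that is, the cluster is supported at the origin. -/

import Mathlib

set_option maxHeartbeats 1000000
set_option synthInstance.maxHeartbeats 400000
open MvPolynomial

/-- The action of `g ∈ GL(n,ℂ)` on polynomials by `g · f = f ∘ g⁻¹`. -/
noncomputable def actGL {n : ℕ} (g : GL (Fin n) ℂ) :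
    MvPolynomial (Fin n) ℂ →ₐ[ℂ] MvPolynomial (Fin n) ℂ :=
  aeval fun i => ∑ j, ((g⁻¹ : GL (Fin n) ℂ) : Matrix (Fin n) (Fin n) ℂ) i j • X j

lemma eval_actGL {n : ℕ} (g : GL (Fin n) ℂ) (f : MvPolynomial (Fin n) ℂ) (q : Fin n → ℂ) :
    eval q (actGL g f) =
      eval (fun i => ∑ j, ((g⁻¹ : GL (Fin n) ℂ) : Matrix (Fin n) (Fin n) ℂ) i j * q j) f := by
  have : (aeval q).comp (actGL g) =
      aeval (fun i => ∑ j, ((g⁻¹ : GL (Fin n) ℂ) : Matrix (Fin n) (Fin n) ℂ) i j * q j) := by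
    apply algHom_ext
    intro i
    simp [actGL, smul_eq_C_mul]
  have h2 := congrFun (congrArg (DFunLike.coe) this) f
  simpa [coe_aeval_eq_eval] using h2

lemma actGL_mul {n : ℕ} (g k : GL (Fin n) ℂ) (f : MvPolynomial (Fin n) ℂ) :
    actGL g (actGL k f) = actGL (g * k) f := by
  have : (actGL g).comp (actGL k) = actGL (g * k) := by
    apply algHom_ext
    intro i
    simp only [AlgHom.coe_comp, Function.comp_apply, actGL, aeval_X]
    rw [map_sum]
    simp only [smul_eq_C_mul, map_mul, aeval_C, aeval_X, algebraMap_eq]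
    have hco : ∀ l, (((g*k)⁻¹ : GL (Fin n) ℂ) : Matrix (Fin n) (Fin n) ℂ) i l
        = ∑ j, ((k⁻¹ : GL (Fin n) ℂ) : Matrix (Fin n) (Fin n) ℂ) i j *
            ((g⁻¹ : GL (Fin n) ℂ) : Matrix (Fin n) (Fin n) ℂ) j l := by
      intro l
      rw [mul_inv_rev]
      simp [Matrix.mul_apply]
    simp only [hco, map_sum, Finset.sum_mul, Finset.mul_sum]
    rw [Finset.sum_comm]
    simp [Finset.mul_sum, mul_assoc]
  exact congrFun (congrArg DFunLike.coe this) f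

lemma exists_eval_ne {n : ℕ} {P : MvPolynomial (Fin n) ℂ} (h : P ≠ 0) :
    ∃ x : Fin n → ℂ, eval x P ≠ 0 := by
  by_contra hc
  push_neg at hc
  exact h (MvPolynomial.funext fun x => by simp [hc x])

/-- For a finite subgroup `𝔊 ⊆ GL(n,ℂ)` and a `𝔊`-cluster `I ⊆ ⟨X₁,…,Xₙ⟩`, the zero
locus `V(I)` equals `{0}`: the cluster is supported at the origin. -/
theorem stmt5 {n : ℕ} (Gg : Subgroup (GL (Fin n) ℂ)) [Fintype Gg]
    (I : Ideal (MvPolynomial (Fin n) ℂ))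
    (hstab : ∀ g ∈ Gg, ∀ f ∈ I, actGL g f ∈ I)
    (hreg : ∃ e : (MvPolynomial (Fin n) ℂ ⧸ I) ≃ₗ[ℂ] MonoidAlgebra ℂ Gg,
      ∀ (g : Gg) (f : MvPolynomial (Fin n) ℂ),
        e (Ideal.Quotient.mk I (actGL (g : GL (Fin n) ℂ) f)) =
          MonoidAlgebra.single g (1 : ℂ) * e (Ideal.Quotient.mk I f))
    (hI : I ≤ Ideal.span (Set.range (X : Fin n → MvPolynomial (Fin n) ℂ))) :
    {q : Fin n → ℂ | ∀ f ∈ I, eval q f = 0} = {0} := by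
  have heval0 : ∀ f ∈ I, eval (0 : Fin n → ℂ) f = 0 := by
    intro f hf
    have hle : Ideal.span (Set.range (X : Fin n → MvPolynomial (Fin n) ℂ))
        ≤ RingHom.ker (eval (0 : Fin n → ℂ)) := by
      rw [Ideal.span_le]
      rintro _ ⟨i, rfl⟩
      simp [RingHom.mem_ker]
    exact hle (hI hf)
  ext q
  simp only [Set.mem_setOf_eq, Set.mem_singleton_iff]
  constructor
  · intro hq
    by_contra hne
    set v : Gg → Fin n → ℂ := fun g i =>
      ∑ j, (((g : GL (Fin n) ℂ)⁻¹ : GL (Fin n) ℂ) : Matrix (Fin n) (Fin n) ℂ) i j * q j with hv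
    have hvne : ∀ g : Gg, v g ≠ 0 := by
      intro g hg0
      apply hne
      have key : Matrix.mulVec ((g : GL (Fin n) ℂ) : Matrix (Fin n) (Fin n) ℂ) (v g) = q := by
        have h1 : v g = Matrix.mulVec
            (((g : GL (Fin n) ℂ)⁻¹ : GL (Fin n) ℂ) : Matrix (Fin n) (Fin n) ℂ) q := by
          funext i; simp [hv, Matrix.mulVec, dotProduct]
        rw [h1, Matrix.mulVec_mulVec]
        have h2 : ((g : GL (Fin n) ℂ) : Matrix (Fin n) (Fin n) ℂ) *
            (((g : GL (Fin n) ℂ)⁻¹ : GL (Fin n) ℂ) : Matrix (Fin n) (Fin n) ℂ) = 1 := by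
          rw [← Units.val_mul, mul_inv_cancel, Units.val_one]
        rw [h2, Matrix.one_mulVec]
      rw [← key, hg0, Matrix.mulVec_zero]
    have hLne : ∀ g : Gg, (∑ i, C (v g i) * X i : MvPolynomial (Fin n) ℂ) ≠ 0 := by
      intro g hL0
      obtain ⟨i0, hi0⟩ : ∃ i, v g i ≠ 0 := by
        by_contra hc; push_neg at hc; exact hvne g (funext hc)
      have := congrArg (eval (Pi.single i0 (1:ℂ))) hL0
      simp [Pi.single_apply, mul_ite, Finset.sum_ite_eq'] at this
      exact hi0 this
    have hPne : (∏ g : Gg, ∑ i, C (v g i) * X i : MvPolynomial (Fin n) ℂ) ≠ 0 :=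
      Finset.prod_ne_zero_iff.mpr fun g _ => hLne g
    obtain ⟨lam, hlam⟩ := exists_eval_ne hPne
    rw [map_prod] at hlam
    have hlam' : ∀ g : Gg, ∑ i, v g i * lam i ≠ 0 := by
      intro g
      have := Finset.prod_ne_zero_iff.mp hlam g (Finset.mem_univ g)
      simpa using this
    set h : MvPolynomial (Fin n) ℂ := ∑ i, C (lam i) * X i with hh
    have hh0 : eval (0 : Fin n → ℂ) h = 0 := by simp [hh]
    have hhv : ∀ g : Gg, eval (v g) h ≠ 0 := by
      intro g
      have : eval (v g) h = ∑ i, v g i * lam i := by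
        simp [hh, mul_comm]
      rw [this]; exact hlam' g
    set f : MvPolynomial (Fin n) ℂ := ∏ g : Gg, actGL (g : GL (Fin n) ℂ) h with hf
    have hfq : eval q f ≠ 0 := by
      rw [hf, map_prod]
      apply Finset.prod_ne_zero_iff.mpr
      intro g _
      rw [eval_actGL]
      exact hhv g
    have hf0 : eval (0 : Fin n → ℂ) f = 0 := by
      rw [hf, map_prod]
      refine Finset.prod_eq_zero (Finset.mem_univ (1 : Gg)) ?_
      rw [eval_actGL]
      have h0' : (fun i => ∑ j, (((((1:Gg) : GL (Fin n) ℂ))⁻¹ : GL (Fin n) ℂ) :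
          Matrix (Fin n) (Fin n) ℂ) i j * (0 : Fin n → ℂ) j) = (0 : Fin n → ℂ) := by
        funext i; simp
      rw [h0']
      exact hh0
    have hinv : ∀ g : Gg, actGL (g : GL (Fin n) ℂ) f = f := by
      intro g
      rw [hf, map_prod]
      simp only [actGL_mul]
      exact Fintype.prod_equiv (Equiv.mulLeft g) _ _ (fun k => by
        simp [Equiv.mulLeft])
    obtain ⟨e, he⟩ := hreg
    set x := e (Ideal.Quotient.mk I f) with hx
    set y := e (Ideal.Quotient.mk I (1 : MvPolynomial (Fin n) ℂ)) with hy
    have hxg : ∀ g : Gg, MonoidAlgebra.single g (1:ℂ) * x = x := by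
      intro g
      rw [hx, ← he g f, hinv g]
    have hyg : ∀ g : Gg, MonoidAlgebra.single g (1:ℂ) * y = y := by
      intro g
      have h1 : actGL ((g : GL (Fin n) ℂ)) (1 : MvPolynomial (Fin n) ℂ) = 1 := map_one _
      rw [hy, ← he g 1, h1]
    have hxconst : ∀ g' : Gg, x.coeff g' = x.coeff 1 := by
      intro g'
      conv_lhs => rw [← hxg g']
      rw [MonoidAlgebra.coeff_single_mul_apply]
      simp
    have hyconst : ∀ g' : Gg, y.coeff g' = y.coeff 1 := by
      intro g'
      conv_lhs => rw [← hyg g']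
      rw [MonoidAlgebra.coeff_single_mul_apply]
      simp
    set a := x.coeff 1 with ha
    set b := y.coeff 1 with hb
    have hkey : Ideal.Quotient.mk I (b • f - a • (1 : MvPolynomial (Fin n) ℂ)) = 0 := by
      apply e.injective
      have hq1 : Ideal.Quotient.mk I (b • f - a • (1 : MvPolynomial (Fin n) ℂ))
          = b • Ideal.Quotient.mk I f - a • Ideal.Quotient.mk I 1 := by
        have hsf := map_smul (Ideal.Quotient.mkₐ ℂ I) b f
        have hs1 := map_smul (Ideal.Quotient.mkₐ ℂ I) a (1 : MvPolynomial (Fin n) ℂ)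
        rw [Ideal.Quotient.mkₐ_eq_mk] at hsf hs1
        rw [map_sub, hsf, hs1]
      rw [hq1, map_sub e, map_smul, map_smul, _root_.map_zero, ← hx, ← hy]
      ext g'
      rw [MonoidAlgebra.coeff_sub, Finsupp.sub_apply, MonoidAlgebra.coeff_smul_apply,
        MonoidAlgebra.coeff_smul_apply, hxconst g',
        hyconst g', MonoidAlgebra.coeff_zero, Finsupp.coe_zero, Pi.zero_apply, smul_eq_mul, smul_eq_mul,
        mul_comm, sub_self]
    have hmem : b • f - a • (1 : MvPolynomial (Fin n) ℂ) ∈ I :=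
      (Ideal.Quotient.eq_zero_iff_mem).mp hkey
    have ha0 : a = 0 := by
      have h1 := heval0 _ hmem
      have h2 : constantCoeff f = 0 := by simpa using hf0
      simp [smul_eq_C_mul, h2] at h1
      exact h1
    have hfI : f ∈ I := by
      rw [← Ideal.Quotient.eq_zero_iff_mem]
      apply e.injective
      rw [_root_.map_zero, ← hx]
      ext g'
      simp [hxconst g', ← ha, ha0]
    exact hfq (hq f hfI)
  · rintro rfl
    exact heval0
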